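/- Let 1 ≤ i ≤ n, let π be a connected decorated permutation of [n] with associated connected Grassmann necklace I, and let J be the connected Grassmann necklace associated to the connected decorated permutation R^{i}[π] defined by R^{i}[π](j) = π(j−i) + i (all values taken mod n in [n]). Then the exchange graphs G^I and G^J are isomorphic as simple graphs. -/

import Mathlib

open SimpleGraph

namespace WS

/-- Integers (elements of the cyclically ordered set `[n]`, identified with `Fin n`)
are *cyclically ordered* if some rotation of the list is strictly increasing. -/
def CyclicallyOrdered {n : ℕ} (l : List (Fin n)) : Prop :=
  ∃ k : ℕ, (l.rotate k).Pairwise (· < ·)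

/-- Two subsets of `[n]` are *weakly separated*. -/
def WeaklySeparated {n : ℕ} (A B : Finset (Fin n)) : Prop :=
  ¬ ∃ a b a' b' : Fin n, CyclicallyOrdered [a, b, a', b'] ∧
      a ∈ A \ B ∧ a' ∈ A \ B ∧ b ∈ B \ A ∧ b' ∈ B \ A

/-- The cyclic successor `i + 1` in `[n]`. -/
def cnext {n : ℕ} (i : Fin n) : Fin n := i + ⟨1 % n, Nat.mod_lt 1 i.pos⟩

/-- A (connected) Grassmann necklace. -/
def IsGrassmannNecklace {n : ℕ} (N : Fin n → Finset (Fin n)) : Prop :=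
  (∀ i j : Fin n, (N i).card = (N j).card) ∧
    (∀ i : Fin n, cnext i ∈ N (cnext i)) ∧ ∀ i : Fin n, N i \ {i} ⊆ N (cnext i)

/-- The linear order `<ᵢ` on `[n]` starting at `i`. -/
def cyclicLT {n : ℕ} (i a b : Fin n) : Prop := (a - i).val < (b - i).val

instance {n : ℕ} (i a b : Fin n) : Decidable (cyclicLT i a b) :=
  inferInstanceAs (Decidable ((a - i).val < (b - i).val))

/-- The Gale order `≤ᵢ` : comparing the sorted lists elementwise w.r.t. `≤ᵢ`. -/
def FinsetLE {n : ℕ} (i : Fin n) (A B : Finset (Fin n)) : Prop :=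
  List.Forall₂ (· ≤ ·) (Finset.sort (A.image fun x => x - i) (· ≤ ·))
    (Finset.sort (B.image fun x => x - i) (· ≤ ·))

/-- The positroid associated to a Grassmann necklace. -/
def positroid {n : ℕ} (N : Fin n → Finset (Fin n)) : Set (Finset (Fin n)) :=
  {J | (∀ i, J.card = (N i).card) ∧ ∀ i, FinsetLE i (N i) J}

/-- A weakly separated collection. -/
def IsWSC {n : ℕ} (W : Finset (Finset (Fin n))) : Prop :=
  ∀ A ∈ W, ∀ B ∈ W, WeaklySeparated A B

/-- A weakly separated collection over a Grassmann necklace. -/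
def IsWSCOver {n : ℕ} (N : Fin n → Finset (Fin n)) (W : Finset (Finset (Fin n))) : Prop :=
  IsWSC W ∧ ∀ A ∈ W, A ∈ positroid N

/-- A maximal weakly separated collection over a Grassmann necklace. -/
def IsMaxWSCOver {n : ℕ} (N : Fin n → Finset (Fin n)) (W : Finset (Finset (Fin n))) : Prop :=
  IsWSCOver N W ∧ ∀ W', IsWSCOver N W' → W ⊆ W' → W' = W

/-- `V ∪ {a, b}`. -/
def pairAdd {n : ℕ} (V : Finset (Fin n)) (a b : Fin n) : Finset (Fin n) :=
  insert a (insert b V)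

/-- `V₂` is obtained from `V₁` by a mutation. -/
def Mutation {n : ℕ} (V1 V2 : Finset (Finset (Fin n))) : Prop :=
  ∃ (V : Finset (Fin n)) (a b c d : Fin n),
    CyclicallyOrdered [a, b, c, d] ∧ a ∉ V ∧ b ∉ V ∧ c ∉ V ∧ d ∉ V ∧
    pairAdd V a b ∈ V1 ∧ pairAdd V b c ∈ V1 ∧ pairAdd V c d ∈ V1 ∧
    pairAdd V d a ∈ V1 ∧ pairAdd V a c ∈ V1 ∧
    V2 = insert (pairAdd V b d) (V1.erase (pairAdd V a c))

/-- The type of maximal weakly separated collections over `N`. -/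
abbrev MWSC {n : ℕ} (N : Fin n → Finset (Fin n)) : Type :=
  {W : Finset (Finset (Fin n)) // IsMaxWSCOver N W}

/-- The exchange graph of a Grassmann necklace. -/
def exchangeGraph {n : ℕ} (N : Fin n → Finset (Fin n)) : SimpleGraph (MWSC N) :=
  SimpleGraph.fromRel fun V1 V2 => Mutation V1.1 V2.1

/-- The type of maximal weakly separated collections over `N` containing `C`. -/
abbrev CMWSC {n : ℕ} (N : Fin n → Finset (Fin n)) (C : Finset (Finset (Fin n))) : Type :=
  {W : Finset (Finset (Fin n)) // IsMaxWSCOver N W ∧ C ⊆ W}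

/-- The `C`-constant graph `G^I(C)` : the induced subgraph of the exchange graph
on the maximal weakly separated collections containing `C`. -/
def constantGraph {n : ℕ} (N : Fin n → Finset (Fin n)) (C : Finset (Finset (Fin n))) :
    SimpleGraph (CMWSC N C) :=
  SimpleGraph.fromRel fun V1 V2 => Mutation V1.1 V2.1

/-- The set of distinct subsets appearing in the necklace. -/
def necklaceSet {n : ℕ} (N : Fin n → Finset (Fin n)) : Finset (Finset (Fin n)) :=
  Finset.univ.image N

/-- The necklace `N` has interior size `c`. -/
def HasInteriorSize {n : ℕ} (N : Fin n → Finset (Fin n)) (c : ℕ) : Prop :=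
  ∀ W, IsMaxWSCOver N W → W.card = (necklaceSet N).card + c

/-- The `C`-constant graph `G^I(C)` has co-dimension `c`. -/
def HasCodim {n : ℕ} (N : Fin n → Finset (Fin n)) (C : Finset (Finset (Fin n))) (c : ℕ) :
    Prop :=
  ∀ W, IsMaxWSCOver N W → W.card = C.card + c

/-- Two `k`-element subsets are quasi-adjacent if their intersection has `k - 1` elements. -/
def QuasiAdjacent {n : ℕ} (A B : Finset (Fin n)) : Prop :=
  A.card = B.card ∧ (A ∩ B).card + 1 = A.card

/-- The `C`-constant graph `G^I(C)` is applicable. -/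
def Applicable {n : ℕ} (N : Fin n → Finset (Fin n)) (C : Finset (Finset (Fin n))) : Prop :=
  ∀ V ∈ C, ∃ l : List (Finset (Fin n)),
    l.head? = some V ∧ (∀ W ∈ l, W ∈ C) ∧ List.Chain' QuasiAdjacent l ∧
    ∃ W ∈ necklaceSet N, l.getLast? = some W

/-- The necklace `N` is mutation-friendly: the intersection of all maximal weakly separated
collections over `N` is exactly the necklace. -/
def MutationFriendly {n : ℕ} (N : Fin n → Finset (Fin n)) : Prop :=
  ∀ A : Finset (Fin n), (∀ W, IsMaxWSCOver N W → A ∈ W) ↔ A ∈ necklaceSet N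

/-- The `C`-constant graph `G^I(C)` is mutation-friendly. -/
def CMutationFriendly {n : ℕ} (N : Fin n → Finset (Fin n)) (C : Finset (Finset (Fin n))) :
    Prop :=
  ∀ A : Finset (Fin n), (∀ W, IsMaxWSCOver N W → C ⊆ W → A ∈ W) ↔ A ∈ C

/-- The necklace `N` is very-mutation-friendly. -/
def VeryMutationFriendly {n : ℕ} (N : Fin n → Finset (Fin n)) : Prop :=
  MutationFriendly N ∧
    ∀ i : ℕ, HasInteriorSize N i →
      ∃ W : ℕ → Finset (Finset (Fin n)),
        (∀ j, 1 ≤ j → j ≤ i - 1 →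
            IsWSCOver N (W j) ∧ necklaceSet N ⊆ W j ∧
            (W j).card + j = i + (necklaceSet N).card ∧
            Applicable N (W j) ∧ CMutationFriendly N (W j)) ∧
        ∀ j, 1 ≤ j → j + 1 ≤ i - 1 → W (j + 1) ⊆ W j

/-- The circular interval `[i, j)` in `[n]`. -/
def circInterval {n : ℕ} (i j : Fin n) : Finset (Fin n) :=
  Finset.univ.filter fun x => (x - i).val < (j - i).val

/-- A connected decorated permutation. -/
def IsConnectedPerm {n : ℕ} (π : Equiv.Perm (Fin n)) : Prop :=
  ¬ ∃ i j : Fin n, i ≠ j ∧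
      (circInterval i j).image (fun x => π x) = circInterval i j ∧
      (circInterval j i).image (fun x => π x) = circInterval j i

/-- The Grassmann necklace associated to a decorated permutation:
`I_i = {j : j <ᵢ π⁻¹(j)}`. -/
def necklaceOfPerm {n : ℕ} (π : Equiv.Perm (Fin n)) : Fin n → Finset (Fin n) :=
  fun i => Finset.univ.filter fun j => cyclicLT i j (π⁻¹ j)

/-- `π` is the decorated permutation associated to the necklace `N`:
`π(i) = j` whenever `I_{i+1} = (I_i ∖ {i}) ∪ {j}`. -/
def IsDecoratedPermOf {n : ℕ} (π : Equiv.Perm (Fin n)) (N : Fin n → Finset (Fin n)) : Prop :=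
  ∀ i : Fin n, N (cnext i) = insert (π i) ((N i).erase i)

/-- The label-reflection operation `LR^{2i}[π](j) = 2i - π⁻¹(2i - j)`. -/
def LRop {n : ℕ} [NeZero n] (i : Fin n) (π : Equiv.Perm (Fin n)) : Equiv.Perm (Fin n) :=
  ((Equiv.subLeft (i + i)).trans (π⁻¹ : Equiv.Perm (Fin n))).trans
    (Equiv.subLeft (i + i))

/-- The between-label-reflection operation `BLR^{2i-1}[π](j) = (2i-1) - π⁻¹((2i-1) - j)`. -/
def BLRop {n : ℕ} [NeZero n] (i : Fin n) (π : Equiv.Perm (Fin n)) : Equiv.Perm (Fin n) :=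
  ((Equiv.subLeft (i + i - 1)).trans (π⁻¹ : Equiv.Perm (Fin n))).trans
    (Equiv.subLeft (i + i - 1))

/-- The rotation operation `R^i[π](j) = π(j - i) + i`. -/
def Rop {n : ℕ} [NeZero n] (i : Fin n) (π : Equiv.Perm (Fin n)) : Equiv.Perm (Fin n) :=
  ((Equiv.subRight i).trans π).trans (Equiv.addRight i)

/-- One step in generating the equivalence class of decorated permutations. -/
def PermStep {n : ℕ} [NeZero n] (π σ : Equiv.Perm (Fin n)) : Prop :=
  σ = π⁻¹ ∨ (∃ i : Fin n, σ = LRop i π) ∨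
    (Even n ∧ ∃ i : Fin n, σ = BLRop i π) ∨ ∃ i : Fin n, σ = Rop i π

/-- Two decorated permutations belong to the same equivalence class. -/
def PermEquiv {n : ℕ} [NeZero n] (π σ : Equiv.Perm (Fin n)) : Prop :=
  Relation.EqvGen PermStep π σ

/-- `σ` is the permutation `π₁ = 312` (on `[3]`, in `Fin 3` coordinates). -/
def IsStandardPermOne (σ : Equiv.Perm (Fin 3)) : Prop :=
  σ 1 = 0 ∧ σ 2 = 1 ∧ σ 0 = 2

/-- `σ` is the permutation `π_c` on `[2c]` (for `c ≥ 2`), in `Fin (2c)` coordinates,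
where the element `a ∈ [2c]` corresponds to `a % 2c : Fin (2c)`. -/
def IsStandardPerm (c : ℕ) (hc : 2 ≤ c) (σ : Equiv.Perm (Fin (2 * c))) : Prop :=
  ∀ a : ℕ, 1 ≤ a → a ≤ 2 * c →
    σ ⟨a % (2 * c), Nat.mod_lt _ (by omega)⟩ =
      ⟨(if a = 1 then 3
        else if a ≤ c then 2 * c + 1 - a
        else if a = c + 1 then 1
        else if a = c + 2 then 2
        else 2 * c + 3 - a) % (2 * c), Nat.mod_lt _ (by omega)⟩

/-- The decorated permutation `π` (on `[n]`) belongs to the equivalence class `𝒞_c`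
of the permutation `π_c`. -/
def InStandardClass (c : ℕ) {n : ℕ} (π : Equiv.Perm (Fin n)) : Prop :=
  (c = 1 ∧ ∃ h : n = 3, ∃ σ : Equiv.Perm (Fin 3),
      IsStandardPermOne σ ∧ PermEquiv ((finCongr h).permCongr π) σ) ∨
    ∃ hc : 2 ≤ c, ∃ h : n = 2 * c, ∃ σ : Equiv.Perm (Fin (2 * c)),
      IsStandardPerm c hc σ ∧
      @PermEquiv (2 * c) ⟨by omega⟩ ((finCongr h).permCongr π) σ

/-- The embedding of the elements of `[n]` into `[n + m - 2]` used in gluing (the element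
`n` of `[n]`, i.e. `0 : Fin n`, is sent to the element `n` of `[n + m - 2]`). -/
def glueEmbed {n m : ℕ} (hn : 3 ≤ n) (hm : 3 ≤ m) (v : Fin n) : Fin (n + m - 2) :=
  if h : v.val = 0 then ⟨n, by omega⟩ else ⟨v.val, by have := v.isLt; omega⟩

/-- The shifted embedding `b ↦ b + n - 2` of the elements of `[m]` into `[n + m - 2]`
used in gluing (the element `m` of `[m]`, i.e. `0 : Fin m`, is sent to the element
`n + m - 2`, i.e. `0 : Fin (n + m - 2)`). -/
def glueShift {n m : ℕ} (hn : 3 ≤ n) (hm : 3 ≤ m) (v : Fin m) : Fin (n + m - 2) :=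
  if h : v.val = 0 then ⟨0, by omega⟩ else ⟨v.val + n - 2, by have := v.isLt; omega⟩

/-- `π₃` is the decorated permutation of the glued Grassmann necklace `I □ J`, where
`π₁, π₂` are the decorated permutations of `I, J`. -/
def IsGluedPerm {n m : ℕ} (hn : 3 ≤ n) (hm : 3 ≤ m)
    (π1 : Equiv.Perm (Fin n)) (π2 : Equiv.Perm (Fin m))
    (π3 : Equiv.Perm (Fin (n + m - 2))) : Prop :=
  (∀ a : Fin n, a.val ≠ 0 → (π1 a).val ≠ 0 →
      π3 (glueEmbed hn hm a) = glueEmbed hn hm (π1 a)) ∧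
  (∀ a : Fin n, a.val ≠ 0 → (π1 a).val = 0 →
      π3 (glueEmbed hn hm a) = glueShift hn hm (π2 ⟨1, by omega⟩)) ∧
  (∀ a : Fin m, (a.val = 0 ∨ 3 ≤ a.val) → π2 a ≠ ⟨1, by omega⟩ →
      π3 (glueShift hn hm a) = glueShift hn hm (π2 a)) ∧
  (∀ a : Fin m, (a.val = 0 ∨ 3 ≤ a.val) → π2 a = ⟨1, by omega⟩ →
      π3 (glueShift hn hm a) = glueEmbed hn hm (π1 ⟨0, by omega⟩))

/-- The box product of an arbitrary family of simple graphs. -/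
def boxProdFamily {ι : Type*} {V : ι → Type*} (G : ∀ i, SimpleGraph (V i)) :
    SimpleGraph (∀ i, V i) where
  Adj v w := ∃ j, (G j).Adj (v j) (w j) ∧ ∀ l, l ≠ j → v l = w l
  symm := ⟨by
    rintro v w ⟨j, h, hl⟩
    exact ⟨j, (G j).adj_symm h, fun l hlj => (hl l hlj).symm⟩⟩
  loopless := ⟨by
    rintro v ⟨j, h, -⟩
    exact (G j).loopless.irrefl _ h⟩

section Aux

variable {n : ℕ} [NeZero n]

/-- Shifting a subset of `Fin n` by `s`. -/
def shiftSet (s : Fin n) (S : Finset (Fin n)) : Finset (Fin n) := S.image (· + s)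

lemma mem_shiftSet {s : Fin n} {S : Finset (Fin n)} {x : Fin n} :
    x ∈ shiftSet s S ↔ x - s ∈ S := by
  unfold shiftSet
  simp only [Finset.mem_image]
  constructor
  · rintro ⟨y, hy, rfl⟩; simpa using hy
  · intro h; exact ⟨x - s, h, by abel⟩

lemma shiftSet_neg (s : Fin n) (A : Finset (Fin n)) : shiftSet (-s) (shiftSet s A) = A := by
  unfold shiftSet
  rw [Finset.image_image]
  have h : ((· + -s) ∘ (· + s) : Fin n → Fin n) = id := funext fun x => by simp
  rw [h, Finset.image_id]

lemma shiftSet_neg' (s : Fin n) (A : Finset (Fin n)) : shiftSet s (shiftSet (-s) A) = A := by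
  have := shiftSet_neg (-s) A
  rwa [neg_neg] at this

lemma shiftSet_injective (s : Fin n) : Function.Injective (shiftSet s (n := n)) :=
  Finset.image_injective (add_left_injective s)

lemma card_shiftSet (s : Fin n) (A : Finset (Fin n)) : (shiftSet s A).card = A.card :=
  Finset.card_image_of_injective _ (add_left_injective s)

lemma cyc4_iff (a b c d : Fin n) :
    CyclicallyOrdered [a, b, c, d] ↔
      ([a,b,c,d].Pairwise (· < ·) ∨ [b,c,d,a].Pairwise (· < ·) ∨
        [c,d,a,b].Pairwise (· < ·) ∨ [d,a,b,c].Pairwise (· < ·)) := by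
  constructor
  · rintro ⟨k, hk⟩
    have hlen : ([a,b,c,d] : List (Fin n)).length = 4 := rfl
    rw [← List.rotate_mod, hlen] at hk
    have hlt : k % 4 = 0 ∨ k % 4 = 1 ∨ k % 4 = 2 ∨ k % 4 = 3 := by omega
    have r0 : ([a,b,c,d] : List (Fin n)).rotate 0 = [a,b,c,d] := rfl
    have r1 : ([a,b,c,d] : List (Fin n)).rotate 1 = [b,c,d,a] := rfl
    have r2 : ([a,b,c,d] : List (Fin n)).rotate 2 = [c,d,a,b] := rfl
    have r3 : ([a,b,c,d] : List (Fin n)).rotate 3 = [d,a,b,c] := rfl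
    rcases hlt with h | h | h | h <;> rw [h] at hk
    · rw [r0] at hk; exact Or.inl hk
    · rw [r1] at hk; exact Or.inr (Or.inl hk)
    · rw [r2] at hk; exact Or.inr (Or.inr (Or.inl hk))
    · rw [r3] at hk; exact Or.inr (Or.inr (Or.inr hk))
  · rintro (h | h | h | h)
    · exact ⟨0, h⟩
    · exact ⟨1, h⟩
    · exact ⟨2, h⟩
    · exact ⟨3, h⟩

set_option maxHeartbeats 1000000 in
lemma cyc4_shift (s : Fin n) {a b c d : Fin n} (h : CyclicallyOrdered [a, b, c, d]) :
    CyclicallyOrdered [a + s, b + s, c + s, d + s] := by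
  rw [cyc4_iff] at h ⊢
  have key : ∀ x : Fin n,
      (x.val + s.val) % n = x.val + s.val ∨ (x.val + s.val) % n + n = x.val + s.val := by
    intro x
    rcases Nat.lt_or_ge (x.val + s.val) n with hx | hx
    · left
      exact Nat.mod_eq_of_lt hx
    · right
      have h2 : x.val + s.val < 2 * n := by
        have := x.isLt; have := s.isLt; omega
      rw [Nat.mod_eq_sub_mod hx, Nat.mod_eq_of_lt (by omega)]
      omega
  have ha := key a; have hb := key b; have hc := key c; have hd := key d
  have hal := a.isLt; have hbl := b.isLt; have hcl := c.isLt; have hdl := d.isLt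
  have hsl := s.isLt
  have hpos : 0 < n := Nat.pos_of_ne_zero (NeZero.ne n)
  have ba := Nat.mod_lt (a.val + s.val) hpos
  have bb := Nat.mod_lt (b.val + s.val) hpos
  have bc := Nat.mod_lt (c.val + s.val) hpos
  have bd := Nat.mod_lt (d.val + s.val) hpos
  simp only [List.pairwise_cons, List.mem_cons, List.mem_singleton, List.not_mem_nil,
    List.Pairwise.nil, and_true, true_and, implies_true, forall_eq_or_imp, forall_eq,
    IsEmpty.forall_iff, List.pairwise_singleton, Fin.lt_def, Fin.val_add] at h ⊢
  rcases h with h | h | h | h <;> rcases ha with ha | ha <;> rcases hb with hb | hb <;>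
    rcases hc with hc | hc <;> rcases hd with hd | hd <;> omega

lemma ws_shift (s : Fin n) {A B : Finset (Fin n)} (h : WeaklySeparated A B) :
    WeaklySeparated (shiftSet s A) (shiftSet s B) := by
  rintro ⟨a, b, a', b', hcyc, ha, ha', hb, hb'⟩
  apply h
  have hmem : ∀ (X Y : Finset (Fin n)) (x : Fin n),
      x ∈ shiftSet s X \ shiftSet s Y → x - s ∈ X \ Y := by
    intro X Y x hx
    rw [Finset.mem_sdiff] at hx ⊢
    exact ⟨mem_shiftSet.mp hx.1, fun hc => hx.2 (mem_shiftSet.mpr hc)⟩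
  refine ⟨a - s, b - s, a' - s, b' - s, ?_, hmem _ _ _ ha, hmem _ _ _ ha',
    hmem _ _ _ hb, hmem _ _ _ hb'⟩
  have := cyc4_shift (-s) hcyc
  simpa [sub_eq_add_neg] using this

lemma cyclicLT_shift (s k a b : Fin n) :
    cyclicLT (k + s) (a + s) (b + s) ↔ cyclicLT k a b := by
  unfold cyclicLT
  have h1 : a + s - (k + s) = a - k := by abel
  have h2 : b + s - (k + s) = b - k := by abel
  rw [h1, h2]

lemma finsetLE_shift (s k : Fin n) (A B : Finset (Fin n)) :
    FinsetLE (k + s) (shiftSet s A) (shiftSet s B) ↔ FinsetLE k A B := by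
  unfold FinsetLE shiftSet
  rw [Finset.image_image, Finset.image_image]
  have h : ((· - (k + s)) ∘ (· + s) : Fin n → Fin n) = (· - k) := by
    funext x; simp only [Function.comp_apply]; abel
  rw [h]

lemma positroid_shift (s : Fin n) (N : Fin n → Finset (Fin n)) (J : Finset (Fin n)) :
    shiftSet s J ∈ positroid (fun k => shiftSet s (N (k - s))) ↔ J ∈ positroid N := by
  unfold positroid
  simp only [Set.mem_setOf_eq, card_shiftSet]
  constructor
  · rintro ⟨h1, h2⟩
    refine ⟨fun k => by simpa using h1 (k + s), fun k => ?_⟩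
    have h3 := h2 (k + s)
    have h4 : k + s - s = k := by abel
    rw [h4] at h3
    exact (finsetLE_shift s k (N k) J).mp h3
  · rintro ⟨h1, h2⟩
    refine ⟨fun k => by simpa using h1 (k - s), fun k => ?_⟩
    have h3 := (finsetLE_shift s (k - s) (N (k - s)) J).mpr (h2 (k - s))
    have h4 : k - s + s = k := by abel
    rwa [h4] at h3

lemma wscover_shift (s : Fin n) (N : Fin n → Finset (Fin n)) (W : Finset (Finset (Fin n)))
    (h : IsWSCOver N W) :
    IsWSCOver (fun k => shiftSet s (N (k - s))) (W.image (shiftSet s)) := by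
  obtain ⟨h1, h2⟩ := h
  constructor
  · intro A hA B hB
    obtain ⟨A', hA', rfl⟩ := Finset.mem_image.mp hA
    obtain ⟨B', hB', rfl⟩ := Finset.mem_image.mp hB
    exact ws_shift s (h1 A' hA' B' hB')
  · intro A hA
    obtain ⟨A', hA', rfl⟩ := Finset.mem_image.mp hA
    exact (positroid_shift s N A').mpr (h2 A' hA')

lemma necklace_unshift (s : Fin n) (N N' : Fin n → Finset (Fin n))
    (h : N' = fun k => shiftSet s (N (k - s))) :
    (fun k => shiftSet (-s) (N' (k - -s))) = N := by
  funext k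
  conv_lhs => rw [h]
  show shiftSet (-s) (shiftSet s (N (k - -s - s))) = N k
  have h4 : k - -s - s = k := by abel
  rw [h4, shiftSet_neg]

lemma image_shift_shift_neg (s : Fin n) (W : Finset (Finset (Fin n))) :
    (W.image (shiftSet s)).image (shiftSet (-s)) = W := by
  rw [Finset.image_image]
  have h : (shiftSet (-s) ∘ shiftSet s : Finset (Fin n) → Finset (Fin n)) = id :=
    funext fun A => shiftSet_neg s A
  rw [h, Finset.image_id]

lemma image_shift_neg_shift (s : Fin n) (W : Finset (Finset (Fin n))) :
    (W.image (shiftSet (-s))).image (shiftSet s) = W := by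
  have := image_shift_shift_neg (-s) W
  rwa [neg_neg] at this

lemma maxwsc_shift (s : Fin n) (N : Fin n → Finset (Fin n)) (W : Finset (Finset (Fin n)))
    (h : IsMaxWSCOver N W) :
    IsMaxWSCOver (fun k => shiftSet s (N (k - s))) (W.image (shiftSet s)) := by
  obtain ⟨h1, h2⟩ := h
  refine ⟨wscover_shift s N W h1, ?_⟩
  intro W' hW' hsub
  have hW'' := wscover_shift (-s) _ W' hW'
  rw [necklace_unshift s N _ rfl] at hW''
  have hsub' : W ⊆ W'.image (shiftSet (-s)) := by
    intro A hA
    have h3 : shiftSet s A ∈ W' := hsub (Finset.mem_image_of_mem _ hA)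
    have h4 := Finset.mem_image_of_mem (shiftSet (-s)) h3
    rwa [shiftSet_neg] at h4
  have heq := h2 _ hW'' hsub'
  rw [← heq, image_shift_neg_shift]

lemma pairAdd_shift (s : Fin n) (V : Finset (Fin n)) (a b : Fin n) :
    shiftSet s (pairAdd V a b) = pairAdd (shiftSet s V) (a + s) (b + s) := by
  unfold pairAdd shiftSet
  rw [Finset.image_insert, Finset.image_insert]

lemma mutation_shift (s : Fin n) {V1 V2 : Finset (Finset (Fin n))} (h : Mutation V1 V2) :
    Mutation (V1.image (shiftSet s)) (V2.image (shiftSet s)) := by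
  obtain ⟨V, a, b, c, d, hcyc, ha, hb, hc, hd, m1, m2, m3, m4, m5, heq⟩ := h
  have hnm : ∀ x : Fin n, x ∉ V → x + s ∉ shiftSet s V := by
    intro x hx hc'
    rw [mem_shiftSet] at hc'
    simp only [add_sub_cancel_right] at hc'
    exact hx hc'
  refine ⟨shiftSet s V, a + s, b + s, c + s, d + s, cyc4_shift s hcyc,
    hnm a ha, hnm b hb, hnm c hc, hnm d hd, ?_, ?_, ?_, ?_, ?_, ?_⟩
  · rw [← pairAdd_shift]; exact Finset.mem_image_of_mem _ m1
  · rw [← pairAdd_shift]; exact Finset.mem_image_of_mem _ m2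
  · rw [← pairAdd_shift]; exact Finset.mem_image_of_mem _ m3
  · rw [← pairAdd_shift]; exact Finset.mem_image_of_mem _ m4
  · rw [← pairAdd_shift]; exact Finset.mem_image_of_mem _ m5
  · rw [heq, Finset.image_insert, Finset.image_erase (shiftSet_injective s),
      pairAdd_shift, pairAdd_shift]

lemma necklace_rot (i : Fin n) (π : Equiv.Perm (Fin n)) :
    necklaceOfPerm (Rop i π) = fun k => shiftSet i (necklaceOfPerm π (k - i)) := by
  funext k
  ext x
  rw [mem_shiftSet]
  simp only [necklaceOfPerm, Finset.mem_filter, Finset.mem_univ, true_and]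
  have hinv : (Rop i π)⁻¹ x = π⁻¹ (x - i) + i := by
    simp [Rop, Equiv.Perm.inv_def, Equiv.symm_trans_apply, sub_eq_add_neg]
  rw [hinv]
  have key := cyclicLT_shift i (k - i) (x - i) (π⁻¹ (x - i))
  have e1 : x - i + i = x := by abel
  have e2 : k - i + i = k := by abel
  rw [e1, e2] at key
  exact key

end Aux

theorem exchangeGraph_iso_of_R (n : ℕ) [NeZero n] (hn : 3 ≤ n) (i : Fin n)
    (π : Equiv.Perm (Fin n)) (hπ : IsConnectedPerm π) (hπ' : IsConnectedPerm (Rop i π)) :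
    Nonempty (exchangeGraph (necklaceOfPerm π) ≃g exchangeGraph (necklaceOfPerm (Rop i π))) := by
  have hN : necklaceOfPerm (Rop i π) = fun k => shiftSet i (necklaceOfPerm π (k - i)) :=
    necklace_rot i π
  set N := necklaceOfPerm π with hNdef
  set N' := necklaceOfPerm (Rop i π) with hN'def
  have fwd : ∀ W, IsMaxWSCOver N W → IsMaxWSCOver N' (W.image (shiftSet i)) := by
    intro W h
    rw [hN]
    exact maxwsc_shift i N W h
  have bwd : ∀ W, IsMaxWSCOver N' W → IsMaxWSCOver N (W.image (shiftSet (-i))) := by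
    intro W h
    have h2 := maxwsc_shift (-i) N' W h
    rwa [necklace_unshift i N N' hN] at h2
  let e : MWSC N ≃ MWSC N' :=
    { toFun := fun W => ⟨W.1.image (shiftSet i), fwd _ W.2⟩
      invFun := fun W => ⟨W.1.image (shiftSet (-i)), bwd _ W.2⟩
      left_inv := fun W => Subtype.ext (image_shift_shift_neg i W.1)
      right_inv := fun W => Subtype.ext (image_shift_neg_shift i W.1) }
  refine ⟨⟨e, ?_⟩⟩
  intro V1 V2
  simp only [exchangeGraph, SimpleGraph.fromRel_adj]
  have hmutiff : ∀ A B : Finset (Finset (Fin n)),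
      Mutation (A.image (shiftSet i)) (B.image (shiftSet i)) ↔ Mutation A B := by
    intro A B
    constructor
    · intro h
      have h2 := mutation_shift (-i) h
      rwa [image_shift_shift_neg, image_shift_shift_neg] at h2
    · exact mutation_shift i
  have hne : e V1 ≠ e V2 ↔ V1 ≠ V2 := by
    constructor
    · intro h hc; exact h (congrArg e hc)
    · intro h hc; exact h (e.injective hc)
  constructor
  · rintro ⟨h1, h2⟩
    refine ⟨hne.mp h1, ?_⟩
    rcases h2 with h2 | h2
    · exact Or.inl ((hmutiff V1.1 V2.1).mp h2)
    · exact Or.inr ((hmutiff V2.1 V1.1).mp h2)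
  · rintro ⟨h1, h2⟩
    refine ⟨hne.mpr h1, ?_⟩
    rcases h2 with h2 | h2
    · exact Or.inl ((hmutiff V1.1 V2.1).mpr h2)
    · exact Or.inr ((hmutiff V2.1 V1.1).mpr h2)

end WS
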